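/- If a game Γ with continuous pseudo-gradient F is weighted strictly monotone with weights w_1,…,w_N, then Γ has exactly one equilibrium x̄ ∈ Δ. -/

import Mathlib

/-
STATEMENT 17: If a game Γ with continuous pseudo-gradient F is weighted strictly
monotone with weights w_1,…,w_N, then Γ has exactly one equilibrium x̄ ∈ Δ.
-/

open Filter Topology

noncomputable section

/-- Joint strategy space. -/
abbrev Strat {N : ℕ} (n : Fin N → ℕ) := ∀ k, Fin (n k) → ℝ

/-- `x` lies in `Δ = Δ₁ × ⋯ × Δ_N`. -/
def JointSimplex {N : ℕ} {n : Fin N → ℕ} (x : Strat n) : Prop :=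
  ∀ k, x k ∈ stdSimplex ℝ (Fin (n k))

/-- `xbar` is an equilibrium: `⟨x_k, r_k(x̄)⟩ ≤ ⟨x̄_k, r_k(x̄)⟩` for all `k` and
all `x_k ∈ Δ_k`. -/
def IsEquilibrium {N : ℕ} {n : Fin N → ℕ} (r : Strat n → Strat n) (xbar : Strat n) : Prop :=
  JointSimplex xbar ∧
    ∀ k, ∀ zk ∈ stdSimplex ℝ (Fin (n k)),
      ∑ i, zk i * r xbar k i ≤ ∑ i, xbar k i * r xbar k i

namespace WSM
variable {N : ℕ} {n : Fin N → ℕ}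

def ip (x y : Strat n) : ℝ := ∑ k, ∑ i, x k i * y k i

lemma ip_nonneg (x : Strat n) : 0 ≤ ip x x :=
  Finset.sum_nonneg fun k _ => Finset.sum_nonneg fun i _ => mul_self_nonneg _

lemma ip_comm (x y : Strat n) : ip x y = ip y x := by simp [ip, mul_comm]
lemma ip_add_left (x y z : Strat n) : ip (x + y) z = ip x z + ip y z := by
  simp [ip, add_mul, Finset.sum_add_distrib]
lemma ip_smul_left (c : ℝ) (x z : Strat n) : ip (c • x) z = c * ip x z := by
  simp [ip, Finset.mul_sum, mul_assoc]
lemma Q_add_smul (u v : Strat n) (c : ℝ) :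
    ip (u + c • v) (u + c • v) = ip u u + 2 * c * ip u v + c ^ 2 * ip v v := by
  have h1 : ip (u + c • v) (u + c • v) = ip u (u + c•v) + c * ip v (u + c•v) := by
    rw [ip_add_left, ip_smul_left]
  rw [h1, ip_comm u (u + c•v), ip_comm v (u + c•v), ip_add_left, ip_add_left,
    ip_smul_left, ip_smul_left, ip_comm v u]
  ring

def D (n : Fin N → ℕ) : Set (Strat n) := {z | JointSimplex z}

lemma D_eq : D n = Set.univ.pi (fun k => stdSimplex ℝ (Fin (n k))) := by
  ext x; simp [D, JointSimplex, Set.mem_pi]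

lemma isCompact_D : IsCompact (D n) := by
  rw [D_eq]; exact isCompact_univ_pi fun k => isCompact_stdSimplex ℝ _

lemma convex_D : Convex ℝ (D n) := by
  rw [D_eq]; exact convex_pi fun k _ => convex_stdSimplex ℝ _

lemma nonempty_D (hn : ∀ k, 0 < n k) : (D n).Nonempty := by
  refine ⟨fun k i => (n k : ℝ)⁻¹, fun k => ⟨fun i => by positivity, ?_⟩⟩
  have : ((n k : ℝ)) ≠ 0 := Nat.cast_ne_zero.mpr (hn k).ne'
  simp [Finset.sum_const, Finset.card_univ]
  field_simp

lemma continuous_ip_left (y : Strat n) : Continuous (fun x : Strat n => ip x y) := by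
  refine continuous_finset_sum _ fun k _ => continuous_finset_sum _ fun i _ => ?_
  exact (((continuous_apply i).comp (continuous_apply (A := fun k => Fin (n k) → ℝ) k))).mul continuous_const

lemma continuous_ip_right (y : Strat n) : Continuous (fun x : Strat n => ip y x) := by
  simpa [ip, mul_comm] using continuous_ip_left (n := n) y

lemma continuous_Q : Continuous (fun x : Strat n => ip x x) := by
  refine continuous_finset_sum _ fun k _ => continuous_finset_sum _ fun i _ => ?_
  exact (((continuous_apply i).comp (continuous_apply k))).mul
    (((continuous_apply i).comp (continuous_apply (A := fun k => Fin (n k) → ℝ) k)))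

lemma entries_le_one {x : Strat n} (hx : x ∈ D n) (k : Fin N) (i : Fin (n k)) :
    0 ≤ x k i ∧ x k i ≤ 1 := by
  obtain ⟨h0, h1⟩ := hx k
  refine ⟨h0 i, ?_⟩
  calc x k i ≤ ∑ j, x k j := Finset.single_le_sum (fun j _ => h0 j) (Finset.mem_univ i)
  _ = 1 := h1

lemma Q_le_D2 {x y : Strat n} (hx : x ∈ D n) (hy : y ∈ D n) :
    ip (x - y) (x - y) ≤ ∑ k, (n k : ℝ) := by
  have h : ∀ k : Fin N, ∑ i, (x - y) k i * (x - y) k i ≤ (n k : ℝ) := by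
    intro k
    calc ∑ i, (x - y) k i * (x - y) k i ≤ ∑ _i : Fin (n k), (1:ℝ) := by
          refine Finset.sum_le_sum fun i _ => ?_
          obtain ⟨hx0, hx1⟩ := entries_le_one hx k i
          obtain ⟨hy0, hy1⟩ := entries_le_one hy k i
          simp only [Pi.sub_apply]
          nlinarith
      _ = (n k : ℝ) := by simp
  exact Finset.sum_le_sum fun k _ => h k

lemma exists_proj (hn : ∀ k, 0 < n k) (z : Strat n) :
    ∃ p ∈ D n, ∀ y ∈ D n, ip (p - y) (p - y) ≤ ip (z - y) (z - y) := by
  have hcont : ContinuousOn (fun p : Strat n => ip (p - z) (p - z)) (D n) :=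
    (continuous_Q.comp (continuous_sub_right z)).continuousOn
  obtain ⟨p, hpD, hmin⟩ := isCompact_D.exists_isMinOn (nonempty_D hn) hcont
  have hchar : ∀ y ∈ D n, 0 ≤ ip (p - z) (y - p) := by
    intro y hy
    by_contra hneg
    push_neg at hneg
    set c := ip (p - z) (y - p) with hc
    set Qv := ip (y - p) (y - p) with hQv
    have hQv0 : 0 ≤ Qv := ip_nonneg _
    have hcpos : 0 < -c := by linarith
    set s : ℝ := min 1 (-c / (Qv + 1)) with hs
    have hs0 : 0 < s := lt_min one_pos (by positivity)
    have hs1 : s ≤ 1 := min_le_left _ _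
    have hmem : p + s • (y - p) ∈ D n := by
      have he : p + s • (y - p) = (1 - s) • p + s • y := by module
      rw [he]
      exact convex_D hpD hy (by linarith) (le_of_lt hs0) (by ring)
    have hge : ip (p - z) (p - z) ≤
        ip (p + s • (y - p) - z) (p + s • (y - p) - z) := hmin hmem
    have hexp : ip (p + s • (y - p) - z) (p + s • (y - p) - z)
        = ip (p - z) (p - z) + 2 * s * c + s ^ 2 * Qv := by
      have h1 : p + s • (y - p) - z = (p - z) + s • (y - p) := by module
      rw [h1, Q_add_smul]
    have key : 0 ≤ 2 * s * c + s ^ 2 * Qv := by rw [hexp] at hge; linarith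
    have hsle : s * (Qv + 1) ≤ -c := by
      have h2 : s ≤ -c / (Qv + 1) := min_le_right _ _
      calc s * (Qv + 1) ≤ (-c / (Qv + 1)) * (Qv + 1) := by
            apply mul_le_mul_of_nonneg_right h2; linarith
        _ = -c := by field_simp
    have h3 : 0 ≤ 2 * c + s * Qv := by nlinarith [key, hs0]
    nlinarith [h3, hsle, hs0, hneg]
  refine ⟨p, hpD, fun y hy => ?_⟩
  have he : z - y = (z - p) + (1:ℝ) • (p - y) := by module
  have h4 : ip (z - p) (p - y) = ip (p - z) (y - p) := by
    have e1 : z - p = -(p - z) := by module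
    have e2 : p - y = -(y - p) := by module
    rw [e1, e2]
    simp only [ip, Pi.neg_apply, Pi.sub_apply]
    congr 1; ext k; congr 1; ext i; ring
  rw [he, Q_add_smul]
  have := hchar y hy
  have := ip_nonneg (z - p)
  rw [h4] at *
  nlinarith [ip_nonneg (n := n) (z - p), hchar y hy]

lemma ip_sub_left (x y z : Strat n) : ip (x - y) z = ip x z - ip y z := by
  have h : x - y + y = x := by module
  have := ip_add_left (x - y) y z
  rw [h] at this; linarith

lemma ip_sub_right (x y z : Strat n) : ip x (y - z) = ip x y - ip x z := by
  rw [ip_comm, ip_sub_left, ip_comm y x, ip_comm z x]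

lemma ip_sum_left {α : Type*} (s : Finset α) (f : α → Strat n) (z : Strat n) :
    ip (∑ t ∈ s, f t) z = ∑ t ∈ s, ip (f t) z := by
  classical
  induction s using Finset.induction with
  | empty => simp [ip]
  | insert a s h ih => rw [Finset.sum_insert h, ip_add_left, ih, Finset.sum_insert h]

/-- Approximate Minty points via projected iteration with averaging. -/
lemma approx_minty (hn : ∀ k, 0 < n k) (FF : Strat n → Strat n)
    (hFc : ContinuousOn FF (D n))
    (hm : ∀ x ∈ D n, ∀ y ∈ D n, ip (x - y) (FF y) ≤ ip (x - y) (FF x))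
    (ε : ℝ) (hε : 0 < ε) :
    ∃ z ∈ D n, ∀ y ∈ D n, ip (z - y) (FF y) ≤ ε := by
  classical
  -- bound on the field
  obtain ⟨b, hbD, hbmax⟩ := isCompact_D.exists_isMaxOn (nonempty_D hn)
    (continuous_Q.comp_continuousOn hFc)
  set B : ℝ := ip (FF b) (FF b) with hB
  have hB0 : 0 ≤ B := ip_nonneg _
  have hBbound : ∀ x ∈ D n, ip (FF x) (FF x) ≤ B := fun x hx => hbmax hx
  set D2 : ℝ := ∑ k, (n k : ℝ) with hD2
  have hD20 : 0 ≤ D2 := Finset.sum_nonneg fun k _ => by positivity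
  set γ : ℝ := ε / (B + 1) with hγ
  have hγpos : 0 < γ := by positivity
  obtain ⟨T0, hT0⟩ := exists_nat_gt (D2 / (γ * ε))
  set T : ℕ := T0 + 1 with hT
  have hTpos : (0:ℝ) < T := by positivity
  have hTgt : D2 / (γ * ε) < (T:ℝ) := by
    have : (T0:ℝ) < T := by exact_mod_cast Nat.lt_succ_self T0
    linarith
  have hD2lt : D2 < (T:ℝ) * γ * ε := by
    have := (div_lt_iff₀ (by positivity : (0:ℝ) < γ * ε)).mp hTgt
    nlinarith
  obtain ⟨a, haD⟩ := nonempty_D hn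
  -- projection map
  set P : Strat n → Strat n := fun z => (exists_proj hn z).choose with hP
  have hPD : ∀ z, P z ∈ D n := fun z => (exists_proj hn z).choose_spec.1
  have hPle : ∀ z, ∀ y ∈ D n, ip (P z - y) (P z - y) ≤ ip (z - y) (z - y) :=
    fun z => (exists_proj hn z).choose_spec.2
  -- the iteration
  set x : ℕ → Strat n := fun t => Nat.rec a (fun _ xp => P (xp - γ • FF xp)) t with hxdef
  have hx0 : x 0 = a := rfl
  have hxs : ∀ t, x (t + 1) = P (x t - γ • FF (x t)) := fun t => rfl
  have hxD : ∀ t, x t ∈ D n := by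
    intro t; induction t with
    | zero => exact haD
    | succ t _ => rw [hxs]; exact hPD _
  -- per-step inequality
  have hstep : ∀ y ∈ D n, ∀ t,
      2 * γ * ip (x t - y) (FF y) ≤
        ip (x t - y) (x t - y) - ip (x (t+1) - y) (x (t+1) - y) + γ ^ 2 * B := by
    intro y hy t
    have h1 : ip (x (t+1) - y) (x (t+1) - y)
        ≤ ip (x t - γ • FF (x t) - y) (x t - γ • FF (x t) - y) := by
      rw [hxs]; exact hPle _ y hy
    have h2 : x t - γ • FF (x t) - y = (x t - y) + (-γ) • FF (x t) := by module
    rw [h2, Q_add_smul] at h1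
    have h3 : ip (FF (x t)) (FF (x t)) ≤ B := hBbound _ (hxD t)
    have h4 : ip (x t - y) (FF y) ≤ ip (x t - y) (FF (x t)) := hm _ (hxD t) _ hy
    nlinarith [h1, h3, h4, hγpos]
  -- summing over t < T
  have hsum : ∀ y ∈ D n,
      2 * γ * ∑ t ∈ Finset.range T, ip (x t - y) (FF y) ≤ D2 + (T:ℝ) * γ ^ 2 * B := by
    intro y hy
    have h5 : ∑ t ∈ Finset.range T,
        (ip (x t - y) (x t - y) - ip (x (t+1) - y) (x (t+1) - y))
        = ip (x 0 - y) (x 0 - y) - ip (x T - y) (x T - y) :=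
      Finset.sum_range_sub' (fun t => ip (x t - y) (x t - y)) T
    have h6 : ∑ t ∈ Finset.range T, (2 * γ * ip (x t - y) (FF y))
        ≤ ∑ t ∈ Finset.range T,
          (ip (x t - y) (x t - y) - ip (x (t+1) - y) (x (t+1) - y) + γ ^ 2 * B) :=
      Finset.sum_le_sum fun t _ => hstep y hy t
    rw [Finset.sum_add_distrib, h5, Finset.sum_const, Finset.card_range,
      ← Finset.mul_sum, nsmul_eq_mul] at h6
    have h7 : ip (x 0 - y) (x 0 - y) ≤ D2 := Q_le_D2 (hxD 0) hy
    have h8 : 0 ≤ ip (x T - y) (x T - y) := ip_nonneg _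
    nlinarith [h6, h7, h8]
  -- the averaged point
  set z : Strat n := (T:ℝ)⁻¹ • ∑ t ∈ Finset.range T, x t with hz
  have hTne : (T:ℝ) ≠ 0 := ne_of_gt hTpos
  have hzD : z ∈ D n := by
    intro k
    constructor
    · intro i
      have : z k i = (T:ℝ)⁻¹ * ∑ t ∈ Finset.range T, x t k i := by
        simp [hz, Finset.sum_apply]
      rw [this]
      have : 0 ≤ ∑ t ∈ Finset.range T, x t k i :=
        Finset.sum_nonneg fun t _ => (hxD t k).1 i
      positivity
    · have hcol : ∀ i, z k i = (T:ℝ)⁻¹ * ∑ t ∈ Finset.range T, x t k i := by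
        intro i; simp [hz, Finset.sum_apply]
      calc ∑ i, z k i = ∑ i, (T:ℝ)⁻¹ * ∑ t ∈ Finset.range T, x t k i := by
            exact Finset.sum_congr rfl fun i _ => hcol i
        _ = (T:ℝ)⁻¹ * ∑ t ∈ Finset.range T, ∑ i, x t k i := by
            rw [← Finset.mul_sum, Finset.sum_comm]
        _ = (T:ℝ)⁻¹ * ∑ t ∈ Finset.range T, (1:ℝ) := by
            rw [Finset.sum_congr rfl fun t _ => (hxD t k).2]
        _ = 1 := by
            rw [Finset.sum_const, Finset.card_range]; field_simp; simp
  refine ⟨z, hzD, fun y hy => ?_⟩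
  have havg : ip (z - y) (FF y)
      = (T:ℝ)⁻¹ * ∑ t ∈ Finset.range T, ip (x t - y) (FF y) := by
    rw [ip_sub_left, hz, ip_smul_left, ip_sum_left]
    have : ∑ t ∈ Finset.range T, ip (x t - y) (FF y)
        = (∑ t ∈ Finset.range T, ip (x t) (FF y)) - (T:ℝ) * ip y (FF y) := by
      rw [Finset.sum_congr rfl fun t _ => ip_sub_left (x t) y (FF y),
        Finset.sum_sub_distrib, Finset.sum_const, Finset.card_range, nsmul_eq_mul]
    rw [this]
    field_simp
  rw [havg]
  set S := ∑ t ∈ Finset.range T, ip (x t - y) (FF y) with hS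
  have h1 : 2 * γ * S ≤ D2 + (T:ℝ) * γ ^ 2 * B := hsum y hy
  have h3 : γ * B ≤ ε := by
    rw [hγ]
    rw [div_mul_eq_mul_div, div_le_iff₀ (by positivity)]
    nlinarith
  have h4 : (T:ℝ) * γ ^ 2 * B ≤ (T:ℝ) * γ * ε := by nlinarith [h3, hTpos, hγpos]
  have h5 : 2 * γ * S ≤ 2 * ((T:ℝ) * γ * ε) := by nlinarith [h1, h4, hD2lt]
  rw [inv_mul_le_iff₀ hTpos]
  nlinarith [h5, hγpos, hTpos]
lemma exists_minty (hn : ∀ k, 0 < n k) (FF : Strat n → Strat n)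
    (hFc : ContinuousOn FF (D n))
    (hm : ∀ x ∈ D n, ∀ y ∈ D n, ip (x - y) (FF y) ≤ ip (x - y) (FF x)) :
    ∃ p ∈ D n, ∀ y ∈ D n, ip (p - y) (FF y) ≤ 0 := by
  choose z hzD hzP using fun m : ℕ =>
    approx_minty hn FF hFc hm ((m : ℝ) + 1)⁻¹ (by positivity)
  obtain ⟨p, hpD, φ, hφ, hconv⟩ := isCompact_D.tendsto_subseq hzD
  refine ⟨p, hpD, fun y hy => ?_⟩
  have hcont : Continuous fun v : Strat n => ip (v - y) (FF y) :=
    (continuous_ip_left (FF y)).comp (continuous_sub_right y)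
  have h1 : Tendsto (fun m => ip (z (φ m) - y) (FF y)) atTop
      (𝓝 (ip (p - y) (FF y))) := ((hcont.tendsto p).comp hconv)
  have h2 : Tendsto (fun m : ℕ => ((m : ℝ) + 1)⁻¹) atTop (𝓝 0) := by
    simpa [one_div] using tendsto_one_div_add_atTop_nhds_zero_nat (𝕜 := ℝ)
  refine le_of_tendsto_of_tendsto' h1 h2 fun m => ?_
  calc ip (z (φ m) - y) (FF y) ≤ ((φ m : ℝ) + 1)⁻¹ := hzP (φ m) y hy
    _ ≤ ((m : ℝ) + 1)⁻¹ := by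
        apply inv_anti₀ (by positivity)
        have hmφ : m ≤ φ m := hφ.le_apply
        have : (m : ℝ) ≤ (φ m : ℝ) := Nat.cast_le.mpr hmφ
        linarith

lemma exists_vi (hn : ∀ k, 0 < n k) (FF : Strat n → Strat n)
    (hFc : ContinuousOn FF (D n))
    (hm : ∀ x ∈ D n, ∀ y ∈ D n, ip (x - y) (FF y) ≤ ip (x - y) (FF x)) :
    ∃ p ∈ D n, ∀ y ∈ D n, 0 ≤ ip (y - p) (FF p) := by
  obtain ⟨p, hpD, hminty⟩ := exists_minty hn FF hFc hm
  refine ⟨p, hpD, fun y hy => ?_⟩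
  set s : ℕ → ℝ := fun m => ((m : ℝ) + 1)⁻¹ with hs
  have hs0 : ∀ m, 0 < s m := fun m => by positivity
  have hs1 : ∀ m, s m ≤ 1 := fun m => by
    rw [hs]; simp only []
    rw [inv_le_one_iff₀]; right; linarith [Nat.cast_nonneg (α := ℝ) m]
  set q : ℕ → Strat n := fun m => p + s m • (y - p) with hq
  have hqD : ∀ m, q m ∈ D n := by
    intro m
    have he : q m = (1 - s m) • p + s m • y := by rw [hq]; module
    rw [he]
    exact convex_D hpD hy (by linarith [hs1 m]) (le_of_lt (hs0 m)) (by ring)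
  have hnn : ∀ m, 0 ≤ ip (y - p) (FF (q m)) := by
    intro m
    have h1 : ip (p - q m) (FF (q m)) ≤ 0 := hminty (q m) (hqD m)
    have he : p - q m = (-(s m)) • (y - p) := by rw [hq]; module
    rw [he] at h1
    have h2 : ip ((-(s m)) • (y - p)) (FF (q m))
        = -(s m) * ip (y - p) (FF (q m)) := by
      simp only [ip, Pi.smul_apply, Pi.sub_apply, smul_eq_mul, Finset.mul_sum]
      congr 1; ext k; congr 1; ext i; ring
    rw [h2] at h1
    nlinarith [hs0 m, h1]
  have hs_to : Tendsto s atTop (𝓝 0) := by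
    simpa [hs, one_div] using tendsto_one_div_add_atTop_nhds_zero_nat (𝕜 := ℝ)
  have hq_to : Tendsto q atTop (𝓝 p) := by
    have h3 : Tendsto (fun m => s m • (y - p)) atTop (𝓝 ((0:ℝ) • (y - p))) :=
      hs_to.smul_const (y - p)
    have h4 : Tendsto q atTop (𝓝 (p + (0:ℝ) • (y - p))) :=
      tendsto_const_nhds.add h3
    simpa using h4
  have hq_toW : Tendsto q atTop (𝓝[D n] p) :=
    tendsto_nhdsWithin_iff.mpr ⟨hq_to, Eventually.of_forall hqD⟩
  have hFFlim : Tendsto (fun m => FF (q m)) atTop (𝓝 (FF p)) :=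
    (hFc p hpD).tendsto.comp hq_toW
  have hlim : Tendsto (fun m => ip (y - p) (FF (q m))) atTop
      (𝓝 (ip (y - p) (FF p))) :=
    ((continuous_ip_right (y - p)).tendsto (FF p)).comp hFFlim
  exact le_of_tendsto_of_tendsto' tendsto_const_nhds hlim hnn
end WSM

open WSM in
theorem weighted_strictly_monotone_game_has_unique_equilibrium
    {N : ℕ} {n : Fin N → ℕ} (hn : ∀ k, 0 < n k)
    (r : Strat n → Strat n)
    -- the pseudo-gradient F = (−r_k)_k is continuous on Δ
    (hr : ContinuousOn r {z | JointSimplex z})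
    -- Γ is weighted strictly monotone with weights w
    (w : Fin N → ℝ) (hw : ∀ k, 0 < w k)
    (hmono : ∀ x y : Strat n, JointSimplex x → JointSimplex y → x ≠ y →
      0 < ∑ k, w k * ∑ i, (x k i - y k i) * ((- r x k i) - (- r y k i))) :
    ∃! xbar : Strat n, IsEquilibrium r xbar := by
  classical
  set FF : Strat n → Strat n := fun x k i => w k * (- r x k i) with hFF
  have hFc : ContinuousOn FF (D n) := by
    have hg : Continuous (fun v : Strat n => (fun k i => w k * (- v k i) : Strat n)) := by
      refine continuous_pi fun k => continuous_pi fun i => continuous_const.mul ?_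
      have hki : Continuous (fun v : Strat n => v k i) :=
        (continuous_apply i).comp (continuous_apply (A := fun k => Fin (n k) → ℝ) k)
      exact hki.neg
    exact hg.comp_continuousOn hr
  have hdiff : ∀ x y : Strat n, ip (x - y) (FF x) - ip (x - y) (FF y)
      = ∑ k, w k * ∑ i, (x k i - y k i) * ((- r x k i) - (- r y k i)) := by
    intro x y
    simp only [ip, hFF, Pi.sub_apply, Finset.mul_sum, ← Finset.sum_sub_distrib]
    congr 1; ext k; congr 1; ext i; ring
  have hm : ∀ x ∈ D n, ∀ y ∈ D n, ip (x - y) (FF y) ≤ ip (x - y) (FF x) := by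
    intro x hx y hy
    by_cases hxy : x = y
    · subst hxy; exact le_rfl
    · linarith [hmono x y hx hy hxy, hdiff x y]
  obtain ⟨p, hpD, hVI⟩ := exists_vi hn FF hFc hm
  have heq : IsEquilibrium r p := by
    refine ⟨hpD, fun k zk hzk => ?_⟩
    set y : Strat n := Function.update p k zk with hy
    have hyD : y ∈ D n := by
      intro k'
      by_cases h : k' = k
      · subst h; simpa [hy] using hzk
      · simpa [hy, Function.update_of_ne h] using hpD k'
    have h0 := hVI y hyD
    have hcalc : ip (y - p) (FF p) = w k * ∑ i, (zk i - p k i) * (- r p k i) := by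
      rw [ip, Finset.sum_eq_single k]
      · simp only [hy, Pi.sub_apply, Function.update_self, hFF, Finset.mul_sum]
        congr 1; ext i; ring
      · intro k' _ hk'
        apply Finset.sum_eq_zero; intro i _
        simp [hy, Function.update_of_ne hk']
      · intro h; exact absurd (Finset.mem_univ k) h
    rw [hcalc] at h0
    have h1 : 0 ≤ ∑ i, (zk i - p k i) * (- r p k i) := by nlinarith [h0, hw k]
    have h2 : ∑ i, (zk i - p k i) * (- r p k i)
        = (∑ i, p k i * r p k i) - ∑ i, zk i * r p k i := by
      have e : ∀ i, (zk i - p k i) * (- r p k i)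
          = p k i * r p k i - zk i * r p k i := fun i => by ring
      rw [Finset.sum_congr rfl fun i _ => e i, Finset.sum_sub_distrib]
    linarith [h1, h2.symm.le, h2.le]
  refine ⟨p, heq, fun q hq => ?_⟩
  by_contra hne
  have hstrict := hmono q p hq.1 hpD hne
  have hA : ∀ k, ∑ i, (q k i - p k i) * ((- r q k i) - (- r p k i)) ≤ 0 := by
    intro k
    have h1 := hq.2 k (p k) (hpD k)
    have h2 := heq.2 k (q k) (hq.1 k)
    have e : ∀ i, (q k i - p k i) * ((- r q k i) - (- r p k i))
        = (p k i * r q k i - q k i * r q k i) + (q k i * r p k i - p k i * r p k i) :=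
      fun i => by ring
    rw [Finset.sum_congr rfl fun i _ => e i, Finset.sum_add_distrib,
      Finset.sum_sub_distrib, Finset.sum_sub_distrib]
    linarith
  have hsum : ∑ k, w k * ∑ i, (q k i - p k i) * ((- r q k i) - (- r p k i)) ≤ 0 :=
    Finset.sum_nonpos fun k _ => mul_nonpos_of_nonneg_of_nonpos (le_of_lt (hw k)) (hA k)
  linarith
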